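/- For every i ∈ ℕ₀ one has (D₁^i ∘ D₂)(z_{i,1}) = d_{i,0}·c_i·z_{i+1}, where z_{i,1} := z_{i+1}·z_i − q11^{i(i+1)}·q12^{i+1}·q21^i·q22·z_i·z_{i+1}, c_i := q21^{-i}·b_i·[i]!_{q11^{-1}}, and d_{i,0} := q21^{-1}·(1 − q11^i·q12·q21)·[i+1]_{q11^{-1}} + (q11^{i(i+1)}·q12^i·q21^{i+1}·q22)^{-1} − q11^{i(i+1)}·q12^{i+1}·q21^i·q22. -/

import Mathlib

noncomputable section

variable {k : Type*} [Field k]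

/-- The algebra endomorphism of the free algebra on two generators with
`x1 ↦ a • x1`, `x2 ↦ b • x2`. -/
def alph (a b : k) : FreeAlgebra k (Fin 2) →ₐ[k] FreeAlgebra k (Fin 2) :=
  FreeAlgebra.lift k ![a • FreeAlgebra.ι k 0, b • FreeAlgebra.ι k 1]

/-- The elements `z_i`, defined by `z_0 = x2`, `z_{i+1} = x1·z_i − q11^i·q12·z_i·x1`. -/
def zz (q11 q12 : k) : ℕ → FreeAlgebra k (Fin 2)
  | 0 => FreeAlgebra.ι k 1
  | (i + 1) => FreeAlgebra.ι k 0 * zz q11 q12 i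
      - (q11 ^ i * q12) • (zz q11 q12 i * FreeAlgebra.ι k 0)

/-- The elements `u_i`, defined by `u_0 = x1`, `u_{i+1} = u_i·x2 − q12·q22^i·x2·u_i`. -/
def uu (q12 q22 : k) : ℕ → FreeAlgebra k (Fin 2)
  | 0 => FreeAlgebra.ι k 0
  | (i + 1) => uu q12 q22 i * FreeAlgebra.ι k 1
      - (q12 * q22 ^ i) • (FreeAlgebra.ι k 1 * uu q12 q22 i)

/-- The q-number `[m]_p = 1 + p + ⋯ + p^{m-1}`. -/
def qnum (p : k) (m : ℕ) : k := ∑ j ∈ Finset.range m, p ^ j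

/-- The q-factorial `[m]!_p = [1]_p·[2]_p⋯[m]_p`. -/
def qfact (p : k) (m : ℕ) : k := ∏ l ∈ Finset.range m, qnum p (l + 1)

/-- `b_i = ∏_{j=0}^{i-1} (1 − q11^j·q12·q21)`. -/
def bb (q11 q12 q21 : k) (i : ℕ) : k :=
  ∏ j ∈ Finset.range i, (1 - q11 ^ j * q12 * q21)

/-- `c_i = q21^{-i}·b_i·[i]!_{q11⁻¹}`. -/
def cc (q11 q12 q21 : k) (i : ℕ) : k :=
  q21⁻¹ ^ i * bb q11 q12 q21 i * qfact q11⁻¹ i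

/-- `d_{i,0}`. -/
def dd (q11 q12 q21 q22 : k) (i : ℕ) : k :=
  q21⁻¹ * (1 - q11 ^ i * q12 * q21) * qnum q11⁻¹ (i + 1)
    + (q11 ^ (i * (i + 1)) * q12 ^ i * q21 ^ (i + 1) * q22)⁻¹
    - q11 ^ (i * (i + 1)) * q12 ^ (i + 1) * q21 ^ i * q22

lemma alph_x1 (a b : k) : alph a b (FreeAlgebra.ι k 0) = a • FreeAlgebra.ι k 0 := by
  simp [alph]
lemma alph_x2 (a b : k) : alph a b (FreeAlgebra.ι k 1) = b • FreeAlgebra.ι k 1 := by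
  simp [alph]
lemma alph_zz (a b q11 q12 : k) (j : ℕ) :
    alph a b (zz q11 q12 j) = (a ^ j * b) • zz q11 q12 j := by
  induction j with
  | zero => simp [zz, alph_x2]
  | succ n ih =>
      simp only [zz, map_sub, map_smul, map_mul, alph_x1, ih, smul_smul,
        mul_smul_comm, smul_mul_assoc, smul_sub]
      match_scalars <;> ring

lemma pow_mul_inv_pow (q : k) (hq : q ≠ 0) (a b : ℕ) :
    q ^ (a + b) * q⁻¹ ^ b = q ^ a := by
  rw [pow_add, mul_assoc, ← mul_pow, mul_inv_cancel₀ hq, one_pow, mul_one]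

lemma qnum_one (p : k) : qnum p 1 = 1 := by simp [qnum]
lemma qnum_succ (p : k) (m : ℕ) : qnum p (m + 1) = 1 + p * qnum p m := by
  rw [qnum, Finset.sum_range_succ']
  simp only [qnum, Finset.mul_sum, pow_succ', pow_zero]
  ring
lemma bb_succ (q11 q12 q21 : k) (i : ℕ) :
    bb q11 q12 q21 (i + 1) = bb q11 q12 q21 i * (1 - q11 ^ i * q12 * q21) :=
  Finset.prod_range_succ _ _

lemma qnum_succ' (p : k) (m : ℕ) : qnum p (m + 1) = qnum p m + p ^ m := by
  rw [qnum, Finset.sum_range_succ]; rfl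

section D
variable (q11 q12 q21 q22 : k)
variable (D1 : FreeAlgebra k (Fin 2) →ₗ[k] FreeAlgebra k (Fin 2))
variable (hD1x1 : D1 (FreeAlgebra.ι k 0) = 1)
variable (hD1x2 : D1 (FreeAlgebra.ι k 1) = 0)
variable (hD1mul : ∀ a b : FreeAlgebra k (Fin 2),
      D1 (a * b) = D1 a * b + alph q11⁻¹ q12⁻¹ a * D1 b)
variable (D2 : FreeAlgebra k (Fin 2) →ₗ[k] FreeAlgebra k (Fin 2))
variable (hD2x1 : D2 (FreeAlgebra.ι k 0) = 0)
variable (hD2x2 : D2 (FreeAlgebra.ι k 1) = 1)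
variable (hD2mul : ∀ a b : FreeAlgebra k (Fin 2),
      D2 (a * b) = D2 a * b + alph q21⁻¹ q22⁻¹ a * D2 b)

include hD1x1 hD1x2 hD1mul in
lemma D1_zz (hq11 : q11 ≠ 0) (hq12 : q12 ≠ 0) (j : ℕ) : D1 (zz q11 q12 j) = 0 := by
  induction j with
  | zero => simpa [zz] using hD1x2
  | succ n ih =>
      rw [zz, map_sub, map_smul, hD1mul, hD1mul, ih, hD1x1, alph_zz]
      have h : q11 ^ n * q12 * (q11⁻¹ ^ n * q12⁻¹) = 1 := by
        rw [mul_mul_mul_comm, ← mul_pow, mul_inv_cancel₀ hq11, mul_inv_cancel₀ hq12, one_pow, one_mul]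
      simp only [zero_add, add_zero, zero_mul, mul_zero, one_mul, mul_one, smul_smul, h, one_smul]
      exact sub_self (zz q11 q12 n)

include hD2x1 hD2x2 hD2mul in
lemma D2_zz (hq21 : q21 ≠ 0) (j : ℕ) :
    D2 (zz q11 q12 j) = (q21⁻¹ ^ j * bb q11 q12 q21 j) • (FreeAlgebra.ι k 0) ^ j := by
  induction j with
  | zero => simp [zz, bb, hD2x2]
  | succ n ih =>
      rw [zz, map_sub, map_smul, hD2mul, hD2mul, ih, hD2x1, bb_succ]
      simp only [alph_x1, alph_zz, smul_mul_assoc, mul_smul_comm, smul_smul, mul_zero,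
        zero_mul, add_zero, zero_add, smul_sub, ← pow_succ, ← pow_succ']
      match_scalars <;> (field_simp; ring_nf)
      linear_combination (q21 * q21⁻¹ ^ n * bb q11 q12 q21 n * q11 ^ n * q12 - q21⁻¹ ^ n * bb q11 q12 q21 n) * mul_inv_cancel₀ hq21

include hD1x1 hD1mul in
lemma D1_x1pow (w : FreeAlgebra k (Fin 2)) (hw : D1 w = 0) (m : ℕ) :
    D1 (FreeAlgebra.ι k 0 ^ (m + 1) * w) =
      qnum q11⁻¹ (m + 1) • (FreeAlgebra.ι k 0 ^ m * w) := by
  induction m with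
  | zero => simp [hD1mul, hD1x1, hw, qnum_one, alph_x1]
  | succ n ih =>
      rw [pow_succ', mul_assoc, hD1mul, ih, hD1x1, alph_x1, one_mul]
      rw [qnum_succ q11⁻¹ (n+1)]
      simp only [smul_smul, mul_smul_comm, smul_mul_assoc, ← pow_succ', ← mul_assoc]
      match_scalars <;> ring

include hD1x1 hD1mul in
lemma x1pow_D1 (w : FreeAlgebra k (Fin 2)) (hw : D1 w = 0) (s : k)
    (haw : alph q11⁻¹ q12⁻¹ w = s • w) (m : ℕ) :
    D1 (w * FreeAlgebra.ι k 0 ^ (m + 1)) =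
      (s * qnum q11⁻¹ (m + 1)) • (w * FreeAlgebra.ι k 0 ^ m) := by
  induction m with
  | zero => simp [hD1mul, hD1x1, hw, qnum_one, haw]
  | succ n ih =>
      rw [pow_succ, ← mul_assoc, hD1mul, ih, hD1x1, map_mul, map_pow, haw, alph_x1, mul_one]
      rw [qnum_succ' q11⁻¹ (n+1)]
      simp only [smul_pow, smul_mul_assoc, mul_smul_comm, smul_smul, mul_assoc, ← pow_succ,
        ← pow_succ']
      match_scalars <;> ring

end D

section iter
variable (q11 q12 : k)
variable (D1 : FreeAlgebra k (Fin 2) →ₗ[k] FreeAlgebra k (Fin 2))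
variable (hD1x1 : D1 (FreeAlgebra.ι k 0) = 1)
variable (hD1mul : ∀ a b : FreeAlgebra k (Fin 2),
      D1 (a * b) = D1 a * b + alph q11⁻¹ q12⁻¹ a * D1 b)

lemma iter_smul (n : ℕ) (c : k) (v : FreeAlgebra k (Fin 2)) :
    (⇑D1)^[n] (c • v) = c • (⇑D1)^[n] v := by
  induction n generalizing v with
  | zero => rfl
  | succ n ih => rw [Function.iterate_succ_apply, map_smul, ih, Function.iterate_succ_apply]

include hD1x1 hD1mul in
lemma iter_D1_x1pow (w : FreeAlgebra k (Fin 2)) (hw : D1 w = 0) (n m : ℕ) :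
    (⇑D1)^[n] (FreeAlgebra.ι k 0 ^ (n + m) * w) =
      (∏ l ∈ Finset.range n, qnum q11⁻¹ (m + l + 1)) • (FreeAlgebra.ι k 0 ^ m * w) := by
  induction n with
  | zero => simp
  | succ n ih =>
      rw [show n + 1 + m = (n + m) + 1 by omega, Function.iterate_succ_apply,
        D1_x1pow q11 q12 D1 hD1x1 hD1mul w hw (n + m), iter_smul, ih,
        Finset.prod_range_succ, smul_smul, show m + n + 1 = n + m + 1 by omega, mul_comm]

include hD1x1 hD1mul in
lemma iter_x1pow_D1 (w : FreeAlgebra k (Fin 2)) (hw : D1 w = 0) (s : k)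
    (haw : alph q11⁻¹ q12⁻¹ w = s • w) (n m : ℕ) :
    (⇑D1)^[n] (w * FreeAlgebra.ι k 0 ^ (n + m)) =
      (s ^ n * ∏ l ∈ Finset.range n, qnum q11⁻¹ (m + l + 1)) • (w * FreeAlgebra.ι k 0 ^ m) := by
  induction n with
  | zero => simp
  | succ n ih =>
      rw [show n + 1 + m = (n + m) + 1 by omega, Function.iterate_succ_apply,
        x1pow_D1 q11 q12 D1 hD1x1 hD1mul w hw s haw (n + m), iter_smul, ih,
        Finset.prod_range_succ, smul_smul, show m + n + 1 = n + m + 1 by omega]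
      congr 1
      ring

end iter

lemma prodq_one (p : k) (i : ℕ) :
    ∏ l ∈ Finset.range i, qnum p (1 + l + 1) = qfact p (i + 1) := by
  rw [qfact, Finset.prod_range_succ']
  simp only [Nat.zero_add, qnum_one, mul_one]
  exact Finset.prod_congr rfl fun l _ => by rw [show 1 + l + 1 = l + 1 + 1 by omega]

lemma prodq_zero (p : k) (i : ℕ) :
    ∏ l ∈ Finset.range i, qnum p (0 + l + 1) = qfact p i := by
  rw [qfact]
  exact Finset.prod_congr rfl fun l _ => by rw [Nat.zero_add]

lemma qfact_succ (p : k) (i : ℕ) : qfact p (i + 1) = qfact p i * qnum p (i + 1) :=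
  Finset.prod_range_succ _ _

set_option maxHeartbeats 1000000 in
theorem D1_pow_D2_z_i1
    (q11 q12 q21 q22 : k)
    (hq11 : q11 ≠ 0) (hq12 : q12 ≠ 0) (hq21 : q21 ≠ 0) (hq22 : q22 ≠ 0)
    (D1 : FreeAlgebra k (Fin 2) →ₗ[k] FreeAlgebra k (Fin 2))
    (hD1one : D1 1 = 0)
    (hD1x1 : D1 (FreeAlgebra.ι k 0) = 1)
    (hD1x2 : D1 (FreeAlgebra.ι k 1) = 0)
    (hD1mul : ∀ a b : FreeAlgebra k (Fin 2),
      D1 (a * b) = D1 a * b + alph q11⁻¹ q12⁻¹ a * D1 b)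
    (D2 : FreeAlgebra k (Fin 2) →ₗ[k] FreeAlgebra k (Fin 2))
    (hD2one : D2 1 = 0)
    (hD2x1 : D2 (FreeAlgebra.ι k 0) = 0)
    (hD2x2 : D2 (FreeAlgebra.ι k 1) = 1)
    (hD2mul : ∀ a b : FreeAlgebra k (Fin 2),
      D2 (a * b) = D2 a * b + alph q21⁻¹ q22⁻¹ a * D2 b)
 :
    ∀ i : ℕ,
      (⇑D1)^[i] (D2 (zz q11 q12 (i + 1) * zz q11 q12 i
          - (q11 ^ (i * (i + 1)) * q12 ^ (i + 1) * q21 ^ i * q22)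
              • (zz q11 q12 i * zz q11 q12 (i + 1))))
        = (dd q11 q12 q21 q22 i * cc q11 q12 q21 i) • zz q11 q12 (i + 1) := by
  intro i
  have hz : ∀ j, D1 (zz q11 q12 j) = 0 :=
    D1_zz q11 q12 D1 hD1x1 hD1x2 hD1mul hq11 hq12
  -- expand D2
  rw [map_sub, map_smul, hD2mul, hD2mul,
    D2_zz q11 q12 q21 q22 D2 hD2x1 hD2x2 hD2mul hq21 i,
    D2_zz q11 q12 q21 q22 D2 hD2x1 hD2x2 hD2mul hq21 (i + 1),
    alph_zz q21⁻¹ q22⁻¹ q11 q12 i, alph_zz q21⁻¹ q22⁻¹ q11 q12 (i + 1)]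
  simp only [smul_mul_assoc, mul_smul_comm, smul_smul, smul_sub, smul_add]
  -- distribute the iterate
  rw [← Module.End.pow_apply]
  simp only [map_sub, map_add, map_smul]
  simp only [Module.End.pow_apply]
  -- the four iterate computations
  have e1 := iter_D1_x1pow q11 q12 D1 hD1x1 hD1mul (zz q11 q12 i) (hz i) i 1
  have e2 := iter_x1pow_D1 q11 q12 D1 hD1x1 hD1mul (zz q11 q12 (i + 1)) (hz (i + 1))
    (q11⁻¹ ^ (i + 1) * q12⁻¹) (alph_zz q11⁻¹ q12⁻¹ q11 q12 (i + 1)) i 0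
  have e3 := iter_D1_x1pow q11 q12 D1 hD1x1 hD1mul (zz q11 q12 (i + 1)) (hz (i + 1)) i 0
  have e4 := iter_x1pow_D1 q11 q12 D1 hD1x1 hD1mul (zz q11 q12 i) (hz i)
    (q11⁻¹ ^ i * q12⁻¹) (alph_zz q11⁻¹ q12⁻¹ q11 q12 i) i 1
  simp only [Nat.add_zero, pow_zero, pow_one, one_mul, mul_one, prodq_one, prodq_zero]
    at e1 e2 e3 e4
  rw [e1, e2, e3, e4]
  -- expand z_{i+1} and compare coefficients
  simp only [zz, smul_sub, smul_smul, mul_smul_comm, smul_mul_assoc, smul_add]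
  simp only [cc, dd, bb_succ, qfact_succ]
  have key : q11 ^ (i*(i+1)) * q12^(i+1) * q21^i * q22 *
      (q11⁻¹^(i*i) * q12⁻¹^i * q21⁻¹^(2*i+1) * q22⁻¹) = q11^i * q12 * q21⁻¹^(i+1) := by
    have h1 : q11 ^ (i*(i+1)) * q11⁻¹ ^ (i*i) = q11 ^ i := by
      rw [show i*(i+1) = i + i*i by ring]; exact pow_mul_inv_pow q11 hq11 i (i*i)
    have h2 : q12 ^ (i+1) * q12⁻¹ ^ i = q12 := by
      have := pow_mul_inv_pow q12 hq12 1 i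
      rw [show i + 1 = 1 + i by ring]; simpa using this
    have h3 : q21 ^ i * q21⁻¹ ^ (2*i+1) = q21⁻¹ ^ (i+1) := by
      have := pow_mul_inv_pow q21⁻¹ (inv_ne_zero hq21) (i+1) i
      rw [inv_inv] at this
      calc q21 ^ i * q21⁻¹ ^ (2*i+1) = q21⁻¹ ^ (i+1+i) * q21 ^ i := by ring_nf
      _ = _ := this
    have h4 : q22 * q22⁻¹ = 1 := mul_inv_cancel₀ hq22
    linear_combination (q12^(i+1) * q12⁻¹^i * q21^i * q21⁻¹^(2*i+1) * q22 * q22⁻¹) * h1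
      + (q11^i * q21^i * q21⁻¹^(2*i+1) * q22 * q22⁻¹) * h2
      + (q11^i * q12 * q22 * q22⁻¹) * h3
      + (q11^i * q12 * q21⁻¹^(i+1)) * h4
  match_scalars
  · simp only [mul_inv, ← inv_pow]
    ring
  · simp only [mul_inv, ← inv_pow]
    linear_combination (-(bb q11 q12 q21 i * (1 - q11 ^ i * q12 * q21) * qfact q11⁻¹ i *
      qnum q11⁻¹ (i + 1))) * key
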